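/- Let k ≥ 2. The map g̃ : S^{2k} → S^{2k-1} defined by g̃(z,w,ζ,s) = (2·(conj z)·|w|, 1−2|w|², 2|w|ζ, 2|w|s) is a well-defined continuous map (its image lies on the unit sphere S^{2k-1}) and is nullhomotopic. -/

import Mathlib

noncomputable section

/-- Points `(z, t, ζ, s) ∈ ℂ × ℝ × ℂ^{k-2} × ℝ` (ambient space of `S^{2k-1}`). -/
abbrev Pt (k : ℕ) : Type := ℂ × ℝ × (Fin (k - 2) → ℂ) × ℝ

/-- Points `(z, w, ζ, s) ∈ ℂ × ℂ × ℂ^{k-2} × ℝ` (ambient space of `S^{2k}`). -/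
abbrev Pt2 (k : ℕ) : Type := ℂ × ℂ × (Fin (k - 2) → ℂ) × ℝ

def nsq {k : ℕ} (p : Pt k) : ℝ :=
  ‖p.1‖ ^ 2 + p.2.1 ^ 2 + (∑ m, ‖p.2.2.1 m‖ ^ 2) + p.2.2.2 ^ 2

def nsq2 {k : ℕ} (p : Pt2 k) : ℝ :=
  ‖p.1‖ ^ 2 + ‖p.2.1‖ ^ 2 + (∑ m, ‖p.2.2.1 m‖ ^ 2) + p.2.2.2 ^ 2

/-- The unit sphere `S^{2k-1}`. -/
def Sph (k : ℕ) : Set (Pt k) := {p | nsq p = 1}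

/-- The unit sphere `S^{2k}`. -/
def Sph2 (k : ℕ) : Set (Pt2 k) := {p | nsq2 p = 1}

/-- The map `g̃(z, w, ζ, s) = (2·conj(z)·|w|, 1 − 2|w|², 2|w|ζ, 2|w|s)`. -/
def gTilde (k : ℕ) (p : Pt2 k) : Pt k :=
  (2 * starRingEnd ℂ p.1 * ((‖p.2.1‖ : ℝ) : ℂ),
   1 - 2 * ‖p.2.1‖ ^ 2,
   fun m => ((2 * ‖p.2.1‖ : ℝ) : ℂ) * p.2.2.1 m,
   2 * ‖p.2.1‖ * p.2.2.2)

/-- Homotopy of maps from the subspace `A ⊆ X` into the subspace `B ⊆ Y`. -/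
def HtpyOn {X Y : Type} [TopologicalSpace X] [TopologicalSpace Y]
    (A : Set X) (B : Set Y) (f g : X → Y) : Prop :=
  ∃ H : ℝ × X → Y, ContinuousOn H (Set.Icc (0 : ℝ) 1 ×ˢ A) ∧
    (∀ x ∈ A, H (0, x) = f x) ∧ (∀ x ∈ A, H (1, x) = g x) ∧
    (∀ τ ∈ Set.Icc (0 : ℝ) 1, ∀ x ∈ A, H (τ, x) ∈ B)

@[fun_prop] lemma contConj : Continuous (starRingEnd ℂ) := Complex.continuous_conj

/-- the map `g̃ : S^{2k} → S^{2k-1}`,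
`g̃(z,w,ζ,s) = (2 conj(z)|w|, 1−2|w|², 2|w|ζ, 2|w|s)`, is a well-defined
continuous map whose image lies on the unit sphere `S^{2k-1}`, and it is
nullhomotopic (as a map into `S^{2k-1}`). -/
theorem stmt_8 (k : ℕ) (hk : 2 ≤ k) :
    Continuous (gTilde k) ∧
    Set.MapsTo (gTilde k) (Sph2 k) (Sph k) ∧
    ∃ c ∈ Sph k, HtpyOn (Sph2 k) (Sph k) (gTilde k) (fun _ => c) := by
  refine ⟨?_, ?_, ?_⟩
  · unfold gTilde
    fun_prop
  · intro p hp
    obtain ⟨z, w, ζ, s⟩ := p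
    simp only [Sph2, Set.mem_setOf_eq, nsq2] at hp
    simp only [Sph, Set.mem_setOf_eq, nsq, gTilde, norm_mul, Complex.norm_real,
      RCLike.norm_conj, Real.norm_eq_abs, abs_norm, mul_pow]
    rw [← Finset.mul_sum]
    norm_num
    have h4 : (‖z‖ ^ 2 + ‖w‖ ^ 2 + (∑ x : Fin (k-2), ‖ζ x‖ ^ 2) + s ^ 2) * (4 * ‖w‖ ^ 2) = 1 * (4 * ‖w‖ ^ 2) := by rw [hp]
    nlinarith [h4]
  · refine ⟨((0:ℂ), (-1:ℝ), fun _ => (0:ℂ), (0:ℝ)), by simp [Sph, nsq], ?_⟩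
    refine ⟨fun q =>
        (2 * starRingEnd ℂ q.2.1 *
          ((((1 - q.1) * Real.sqrt (1 - (1 - q.1)^2 * (1 - ‖q.2.2.1‖^2))) : ℝ) : ℂ),
         1 - 2 * Real.sqrt (1 - (1 - q.1)^2 * (1 - ‖q.2.2.1‖^2)) ^ 2,
         fun m => (((2 * Real.sqrt (1 - (1 - q.1)^2 * (1 - ‖q.2.2.1‖^2)) * (1 - q.1)) : ℝ) : ℂ) * q.2.2.2.1 m,
         2 * Real.sqrt (1 - (1 - q.1)^2 * (1 - ‖q.2.2.1‖^2)) * (1 - q.1) * q.2.2.2.2), ?_, ?_, ?_, ?_⟩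
    · apply Continuous.continuousOn
      fun_prop
    · rintro ⟨z, w, ζ, s⟩ hp
      have h0 : 1 - (1 - (0:ℝ)) ^ 2 * (1 - ‖w‖ ^ 2) = ‖w‖ ^ 2 := by ring
      simp only [h0, Real.sqrt_sq (norm_nonneg w), gTilde]
      norm_num
    · rintro ⟨z, w, ζ, s⟩ hp
      have h1 : 1 - (1 - (1:ℝ)) ^ 2 * (1 - ‖w‖ ^ 2) = 1 := by ring
      simp only [h1, Real.sqrt_one]
      norm_num
    · rintro τ ⟨hτ0, hτ1⟩ ⟨z, w, ζ, s⟩ hp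
      simp only [Sph2, Set.mem_setOf_eq, nsq2] at hp
      set c : ℝ := 1 - τ with hc
      have hc0 : 0 ≤ c := by linarith
      have hc1 : c ≤ 1 := by linarith
      have hsum : (0:ℝ) ≤ ∑ x : Fin (k-2), ‖ζ x‖ ^ 2 :=
        Finset.sum_nonneg fun m _ => sq_nonneg _
      have hw1 : ‖w‖ ^ 2 ≤ 1 := by nlinarith [sq_nonneg ‖z‖, sq_nonneg s]
      have ha : 0 ≤ 1 - c ^ 2 * (1 - ‖w‖ ^ 2) := by nlinarith [sq_nonneg ‖w‖]
      have hR2 : Real.sqrt (1 - c ^ 2 * (1 - ‖w‖ ^ 2)) ^ 2 = 1 - c ^ 2 * (1 - ‖w‖ ^ 2) :=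
        Real.sq_sqrt ha
      simp only [Sph, Set.mem_setOf_eq, nsq, norm_mul, Complex.norm_real,
        RCLike.norm_conj, Real.norm_eq_abs, mul_pow, sq_abs, Complex.norm_ofNat]
      rw [← Finset.mul_sum]
      have hs : ∑ x : Fin (k-2), ‖ζ x‖ ^ 2 = 1 - ‖z‖ ^ 2 - ‖w‖ ^ 2 - s ^ 2 := by linarith
      rw [hs, hR2]
      rw [hc]
      ring
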